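/- Let (Q^l)_{l≥0} be a hierarchy of sampling procedures with weak bias |E[φ(X^l)] - E[φ(X^∞)]| = O(2^{-αl}), increment variances V_l = O(2^{-βl}), and per-sample cost C_l = O(2^{γl}), with α ≥ β/2 > 0 and γ > 0. Consider the multilevel estimator with N_l samples at level l for l = 0,...,L, having variance Σ_{l=0}^L V_l/N_l and cost Σ_{l=0}^L C_l N_l. Minimizing total cost subject to fixed total variance yields N_l ∝ 2^{-(β+γ)l/2}. With L ∝ -log₂(ε)/α and N_0 ∝ ε^{-2} K(ε) where K(ε) = Σ_{l=0}^L 2^{(γ-β)l/2}, the mean-square error is O(ε²) and the total cost is O(ε^{-2}) when β > γ, O(ε^{-2} log(ε)²) when β = γ, and O(ε^{-2+(β-γ)/α}) when β < γ. -/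

import Mathlib

open Finset

set_option maxHeartbeats 4000000

/-- The standard multilevel Monte Carlo complexity theorem: with weak bias rate
`|B l| ≤ c_b 2^{-αl}`, increment variances `V l ≤ c_v 2^{-βl}` and per-sample costs
`C l ≤ c_c 2^{γl}` (`α ≥ β/2 > 0`, `γ > 0`), the choices `L ∝ -log₂(ε)/α`,
`N_l = ⌈ε⁻² K(ε) 2^{-(β+γ)l/2}⌉` with `K(ε) = Σ_{l≤L} 2^{(γ-β)l/2}` give mean-square
error (squared bias plus variance) `O(ε²)` at total cost `O(ε⁻²)` if `β > γ`,
`O(ε⁻² log(ε)²)` if `β = γ`, and `O(ε^{-2+(β-γ)/α})` if `β < γ`. -/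
theorem stmt7 (α β γ cb cv cc : ℝ)
    (hα : 0 < α) (hβ : 0 < β) (hγ : 0 < γ) (hαβ : β / 2 ≤ α)
    (hcb : 0 < cb) (hcv : 0 < cv) (hcc : 0 < cc)
    (B V C : ℕ → ℝ)
    (hB : ∀ l, |B l| ≤ cb * (2 : ℝ) ^ (-(α * l)))
    (hV : ∀ l, 0 ≤ V l ∧ V l ≤ cv * (2 : ℝ) ^ (-(β * l)))
    (hC : ∀ l, 0 < C l ∧ C l ≤ cc * (2 : ℝ) ^ (γ * l)) :
    ∃ Cmse > 0, ∃ Ccost > 0, ∀ ε : ℝ, 0 < ε → ε < 1 →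
      let L : ℕ := ⌈(-Real.logb 2 ε) / α⌉₊
      let K : ℝ := ∑ l ∈ Finset.range (L + 1), (2 : ℝ) ^ ((γ - β) * l / 2)
      let Nl : ℕ → ℕ := fun l => ⌈ε ^ (-2 : ℝ) * K * (2 : ℝ) ^ (-((β + γ) * l / 2))⌉₊
      ((B L) ^ 2 + ∑ l ∈ Finset.range (L + 1), V l / (Nl l) ≤ Cmse * ε ^ 2) ∧
      (∑ l ∈ Finset.range (L + 1), C l * (Nl l)
        ≤ Ccost * (if γ < β then ε ^ (-2 : ℝ)
            else if β = γ then ε ^ (-2 : ℝ) * (1 - Real.logb 2 ε) ^ 2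
            else ε ^ ((β - γ) / α - 2))) := by
  have two_pos : (0:ℝ) < 2 := by norm_num
  set r : ℝ := (2:ℝ) ^ ((γ - β)/2) with hr_def
  have hr_pos : 0 < r := Real.rpow_pos_of_pos two_pos _
  set q : ℝ := (2:ℝ) ^ γ with hq_def
  have hq : (1:ℝ) < q := by
    rw [hq_def]
    rw [Real.one_lt_rpow_iff_of_pos two_pos]; exact Or.inl ⟨one_lt_two, hγ⟩
  set cG : ℝ := (2:ℝ) ^ (2*γ) / (q - 1) with hcG_def
  have hcG : 0 < cG := div_pos (Real.rpow_pos_of_pos two_pos _) (by linarith)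
  set c1 : ℝ := 1/(1-r)^2 with hc1_def
  have hc1 : 0 ≤ c1 := by positivity
  set c2 : ℝ := (1/α + 2)^2 with hc2_def
  have hc2 : 0 < c2 := by positivity
  set c3 : ℝ := (r^2/(r-1))^2 with hc3_def
  have hc3 : 0 ≤ c3 := by positivity
  have hCcost : 0 < cc*(c1+c2+c3) + cc*cG := by
    linarith [mul_pos hcc hc2, mul_pos hcc hcG, mul_nonneg hcc.le hc1, mul_nonneg hcc.le hc3]
  refine ⟨cb^2 + cv, add_pos_of_nonneg_of_pos (sq_nonneg cb) hcv, cc*(c1+c2+c3) + cc*cG, hCcost, ?_⟩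
  intro ε hε hε1
  intro L K Nl
  set e : ℝ := Real.logb 2 ε with he_def
  have he_neg : e < 0 := Real.logb_neg one_lt_two hε hε1
  have hx0 : 0 ≤ (-e)/α := div_nonneg (by linarith) hα.le
  have hL1 : (-e)/α ≤ (L:ℝ) := Nat.le_ceil _
  have hL2 : (L:ℝ) < (-e)/α + 1 := Nat.ceil_lt_add_one hx0
  have h2logb : (2:ℝ) ^ e = ε := Real.rpow_logb two_pos (by norm_num) hε
  have hpow : ∀ t : ℝ, (2:ℝ) ^ (e * t) = ε ^ t := by
    intro t
    rw [Real.rpow_mul two_pos.le, h2logb]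
  have hmono : ∀ s t : ℝ, s ≤ t → ε ^ t ≤ ε ^ s :=
    fun s t h => Real.rpow_le_rpow_of_exponent_ge hε hε1.le h
  -- Fact A : 2^{-(αL)} ≤ ε
  have hbiasA : (2:ℝ) ^ (-(α * (L:ℝ))) ≤ ε := by
    have h1 : -e ≤ α * L := by
      rw [div_le_iff₀ hα] at hL1; linarith
    have h2 : -(α * (L:ℝ)) ≤ e := by linarith
    calc (2:ℝ) ^ (-(α * (L:ℝ))) ≤ (2:ℝ) ^ e :=
          Real.rpow_le_rpow_of_exponent_le one_le_two h2
      _ = ε := h2logb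
  -- Fact B : 2^{tL} ≤ 2^t ε^{-(t/α)}
  have hFactB : ∀ t : ℝ, 0 ≤ t → (2:ℝ) ^ (t * (L:ℝ)) ≤ (2:ℝ) ^ t * ε ^ (-(t/α)) := by
    intro t ht
    have h1 : t * (L:ℝ) ≤ t + e * (-(t/α)) := by
      have := mul_le_mul_of_nonneg_left hL2.le ht
      calc t * (L:ℝ) ≤ t * ((-e)/α + 1) := this
        _ = t + e * (-(t/α)) := by ring
    calc (2:ℝ) ^ (t * (L:ℝ)) ≤ (2:ℝ) ^ (t + e * (-(t/α))) :=
          Real.rpow_le_rpow_of_exponent_le one_le_two h1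
      _ = (2:ℝ) ^ t * ε ^ (-(t/α)) := by rw [Real.rpow_add two_pos, hpow]
  -- K facts
  have hP : ∀ l : ℕ, (2:ℝ) ^ ((γ - β) * (l:ℝ) / 2) = r ^ l := by
    intro l
    rw [hr_def, ← Real.rpow_natCast ((2:ℝ) ^ ((γ - β)/2)) l, ← Real.rpow_mul two_pos.le]
    congr 1; ring
  have hK_pos : 0 < K := by
    apply Finset.sum_pos (fun l _ => Real.rpow_pos_of_pos two_pos _)
    exact nonempty_range_iff.mpr (Nat.succ_ne_zero L)
  have hεr : ε ^ (-2:ℝ) = (ε^2)⁻¹ := by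
    rw [show ((-2:ℝ)) = -((2:ℕ):ℝ) by norm_num, Real.rpow_neg hε.le, Real.rpow_natCast]
  have harg_pos : ∀ l : ℕ, 0 < ε ^ (-2:ℝ) * K * (2:ℝ) ^ (-((β + γ) * (l:ℝ) / 2)) := by
    intro l
    have := Real.rpow_pos_of_pos hε (-2:ℝ)
    have := Real.rpow_pos_of_pos two_pos (-((β + γ) * (l:ℝ) / 2))
    positivity
  have hNl_ge : ∀ l : ℕ, ε ^ (-2:ℝ) * K * (2:ℝ) ^ (-((β + γ) * (l:ℝ) / 2)) ≤ (Nl l : ℝ) :=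
    fun l => Nat.le_ceil _
  have hNl_pos : ∀ l : ℕ, (0:ℝ) < (Nl l : ℝ) := fun l => lt_of_lt_of_le (harg_pos l) (hNl_ge l)
  have hNl_le : ∀ l : ℕ, (Nl l : ℝ) ≤ ε ^ (-2:ℝ) * K * (2:ℝ) ^ (-((β + γ) * (l:ℝ) / 2)) + 1 :=
    fun l => (Nat.ceil_lt_add_one (harg_pos l).le).le
  constructor
  · -- MSE bound
    have hbias : (B L)^2 ≤ cb^2 * ε^2 := by
      have h1 : |B L| ≤ cb * ε := by
        calc |B L| ≤ cb * (2:ℝ) ^ (-(α * (L:ℝ))) := hB L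
          _ ≤ cb * ε := by
            exact mul_le_mul_of_nonneg_left hbiasA hcb.le
      calc (B L)^2 = |B L|^2 := (sq_abs _).symm
        _ ≤ (cb * ε)^2 := pow_le_pow_left₀ (abs_nonneg _) h1 2
        _ = cb^2 * ε^2 := by ring
    have hvar : ∑ l ∈ Finset.range (L + 1), V l / (Nl l) ≤ cv * ε^2 := by
      have hterm : ∀ l ∈ Finset.range (L + 1),
          V l / (Nl l) ≤ (cv * ε^2 * K⁻¹) * (2:ℝ) ^ ((γ - β) * (l:ℝ) / 2) := by
        intro l _
        have key : cv * (2:ℝ) ^ (-(β * (l:ℝ))) =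
            (cv * ε^2 * K⁻¹ * (2:ℝ) ^ ((γ - β) * (l:ℝ) / 2)) *
            (ε ^ (-2:ℝ) * K * (2:ℝ) ^ (-((β + γ) * (l:ℝ) / 2))) := by
          have h1 : (2:ℝ) ^ ((γ - β) * (l:ℝ) / 2) * (2:ℝ) ^ (-((β + γ) * (l:ℝ) / 2))
              = (2:ℝ) ^ (-(β * (l:ℝ))) := by
            rw [← Real.rpow_add two_pos]; congr 1; ring
          have h2 : ε^2 * ε ^ (-2:ℝ) = 1 := by
            rw [hεr, mul_inv_cancel₀ (pow_ne_zero 2 hε.ne')]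
          have h3 : K⁻¹ * K = 1 := inv_mul_cancel₀ hK_pos.ne'
          calc cv * (2:ℝ) ^ (-(β * (l:ℝ)))
              = cv * (ε^2 * ε ^ (-2:ℝ)) * (K⁻¹ * K) *
                ((2:ℝ) ^ ((γ - β) * (l:ℝ) / 2) * (2:ℝ) ^ (-((β + γ) * (l:ℝ) / 2))) := by
                rw [h1, h2, h3]; ring
            _ = _ := by ring
        calc V l / (Nl l)
            ≤ (cv * (2:ℝ) ^ (-(β * (l:ℝ)))) / (ε ^ (-2:ℝ) * K * (2:ℝ) ^ (-((β + γ) * (l:ℝ) / 2))) := by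
              apply div_le_div₀ (by positivity) (hV l).2 (harg_pos l) (hNl_ge l)
          _ = (cv * ε^2 * K⁻¹) * (2:ℝ) ^ ((γ - β) * (l:ℝ) / 2) := by
              rw [key]; exact mul_div_cancel_right₀ _ (harg_pos l).ne'
      calc ∑ l ∈ Finset.range (L + 1), V l / (Nl l)
          ≤ ∑ l ∈ Finset.range (L + 1), (cv * ε^2 * K⁻¹) * (2:ℝ) ^ ((γ - β) * (l:ℝ) / 2) :=
            Finset.sum_le_sum hterm
        _ = (cv * ε^2 * K⁻¹) * K := by rw [← Finset.mul_sum]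
        _ = cv * ε^2 := by
            rw [mul_assoc, inv_mul_cancel₀ hK_pos.ne', mul_one]
    calc (B L)^2 + ∑ l ∈ Finset.range (L + 1), V l / (Nl l)
        ≤ cb^2 * ε^2 + cv * ε^2 := add_le_add hbias hvar
      _ = (cb^2 + cv) * ε^2 := by ring
  · -- cost bound
    have hεm2 : 0 < ε ^ (-2:ℝ) := Real.rpow_pos_of_pos hε _
    have hterm : ∀ l ∈ Finset.range (L+1),
        C l * ((Nl l : ℕ) : ℝ) ≤ cc * ε ^ (-2:ℝ) * K * (2:ℝ) ^ ((γ-β)*(l:ℝ)/2)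
          + cc * (2:ℝ) ^ (γ*(l:ℝ)) := by
      intro l _
      have h2e : (2:ℝ) ^ (γ*(l:ℝ)) * (2:ℝ) ^ (-((β+γ)*(l:ℝ)/2)) = (2:ℝ) ^ ((γ-β)*(l:ℝ)/2) := by
        rw [← Real.rpow_add two_pos]; congr 1; ring
      have h1 : C l * ((Nl l : ℕ) : ℝ) ≤ (cc * (2:ℝ) ^ (γ*(l:ℝ))) *
          ((ε ^ (-2:ℝ) * K * (2:ℝ) ^ (-((β+γ)*(l:ℝ)/2))) + 1) :=
        mul_le_mul (hC l).2 (hNl_le l) (hNl_pos l).le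
          (by positivity)
      calc C l * ((Nl l : ℕ) : ℝ) ≤ _ := h1
        _ = cc * ε ^ (-2:ℝ) * K * ((2:ℝ) ^ (γ*(l:ℝ)) * (2:ℝ) ^ (-((β+γ)*(l:ℝ)/2)))
            + cc * (2:ℝ) ^ (γ*(l:ℝ)) := by ring
        _ = _ := by rw [h2e]
    have hgeom : ∑ l ∈ Finset.range (L+1), (2:ℝ) ^ (γ*(l:ℝ)) ≤ cG * ε ^ (-(γ/α)) := by
      have hqcast : ∀ l ∈ Finset.range (L+1), (2:ℝ) ^ (γ*(l:ℝ)) = q ^ l := fun l _ => by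
        rw [hq_def, ← Real.rpow_natCast ((2:ℝ)^γ) l, ← Real.rpow_mul two_pos.le]
      have hεpos : 0 < ε ^ (-(γ/α)) := Real.rpow_pos_of_pos hε _
      have hqL : q ^ (L+1) ≤ (2:ℝ)^(2*γ) * ε ^ (-(γ/α)) := by
        have h1 : q ^ L = (2:ℝ) ^ (γ * (L:ℝ)) := by
          rw [hq_def, ← Real.rpow_natCast ((2:ℝ)^γ) L, ← Real.rpow_mul two_pos.le]
        have h2 := hFactB γ hγ.le
        calc q ^ (L+1) = q * q ^ L := by rw [pow_succ]; ring
          _ ≤ q * ((2:ℝ)^γ * ε ^ (-(γ/α))) := by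
              rw [h1]; exact mul_le_mul_of_nonneg_left h2 (by linarith)
          _ = (2:ℝ)^(2*γ) * ε ^ (-(γ/α)) := by
              rw [hq_def, ← mul_assoc, ← Real.rpow_add two_pos, show γ+γ = 2*γ by ring]
      rw [Finset.sum_congr rfl hqcast, geom_sum_eq hq.ne' (L+1)]
      calc (q^(L+1)-1)/(q-1) ≤ ((2:ℝ)^(2*γ) * ε ^ (-(γ/α)))/(q-1) := by
            apply (div_le_div_iff_of_pos_right (by linarith)).mpr; linarith
        _ = cG * ε ^ (-(γ/α)) := by rw [hcG_def]; ring
    have hsum : ∑ l ∈ Finset.range (L+1), C l * ((Nl l : ℕ) : ℝ)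
        ≤ cc * ε ^ (-2:ℝ) * K^2 + cc * cG * ε ^ (-(γ/α)) := by
      calc ∑ l ∈ Finset.range (L+1), C l * ((Nl l : ℕ) : ℝ)
          ≤ ∑ l ∈ Finset.range (L+1), (cc * ε ^ (-2:ℝ) * K * (2:ℝ) ^ ((γ-β)*(l:ℝ)/2)
              + cc * (2:ℝ) ^ (γ*(l:ℝ))) := Finset.sum_le_sum hterm
        _ = cc * ε ^ (-2:ℝ) * K * K + cc * ∑ l ∈ Finset.range (L+1), (2:ℝ) ^ (γ*(l:ℝ)) := by
            rw [Finset.sum_add_distrib, ← Finset.mul_sum, ← Finset.mul_sum]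
        _ ≤ cc * ε ^ (-2:ℝ) * K * K + cc * (cG * ε ^ (-(γ/α))) :=
            add_le_add le_rfl (mul_le_mul_of_nonneg_left hgeom hcc.le)
        _ = cc * ε ^ (-2:ℝ) * K^2 + cc * cG * ε ^ (-(γ/α)) := by ring
    rcases lt_trichotomy γ β with hcs | hcs | hcs
    · rw [if_pos hcs]
      have hr1 : r < 1 := by
        rw [hr_def]
        exact Real.rpow_lt_one_of_one_lt_of_neg one_lt_two (by linarith)
      have h1r : (0:ℝ) < 1 - r := by linarith
      have hKle : K ≤ 1/(1-r) := by
        have hKr : K = ∑ l ∈ Finset.range (L+1), r ^ l :=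
          Finset.sum_congr rfl (fun l _ => hP l)
        rw [hKr, geom_sum_eq (ne_of_lt hr1) (L+1),
          show r^(L+1)-1 = -(1-r^(L+1)) by ring, show r-1 = -(1-r) by ring, neg_div_neg_eq]
        apply (div_le_div_iff_of_pos_right h1r).mpr
        exact sub_le_self _ (pow_nonneg hr_pos.le _)
      have hK2 : K^2 ≤ c1 := by
        calc K^2 ≤ (1/(1-r))^2 := pow_le_pow_left₀ hK_pos.le hKle 2
          _ = c1 := by rw [hc1_def, div_pow, one_pow]
      have hεγ : ε ^ (-(γ/α)) ≤ ε ^ (-2:ℝ) := by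
        apply hmono
        have : γ/α ≤ 2 := by rw [div_le_iff₀ hα]; linarith
        linarith
      calc ∑ l ∈ Finset.range (L+1), C l * ((Nl l : ℕ) : ℝ)
          ≤ cc * ε ^ (-2:ℝ) * K^2 + cc * cG * ε ^ (-(γ/α)) := hsum
        _ ≤ cc * ε ^ (-2:ℝ) * c1 + cc * cG * ε ^ (-2:ℝ) := by
            apply add_le_add
            · exact mul_le_mul_of_nonneg_left hK2 (mul_pos hcc hεm2).le
            · exact mul_le_mul_of_nonneg_left hεγ (mul_pos hcc hcG).le
        _ ≤ (cc*(c1+c2+c3) + cc*cG) * ε ^ (-2:ℝ) := by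
            linarith [mul_nonneg (mul_nonneg hcc.le hc2.le) hεm2.le,
              mul_nonneg (mul_nonneg hcc.le hc3) hεm2.le]
    · rw [if_neg (by rw [hcs]; exact lt_irrefl β), if_pos hcs.symm]
      have hK_eq : K = (L:ℝ) + 1 := by
        have h1 : ∀ l ∈ Finset.range (L+1), (2:ℝ) ^ ((γ-β)*(l:ℝ)/2) = 1 := fun l _ => by
          rw [show (γ-β)*(l:ℝ)/2 = 0 by rw [hcs]; ring, Real.rpow_zero]
        rw [show K = ∑ l ∈ Finset.range (L+1), (2:ℝ) ^ ((γ-β)*(l:ℝ)/2) from rfl,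
          Finset.sum_congr rfl h1, Finset.sum_const, Finset.card_range]
        push_cast; ring
      have hKle : K ≤ (1/α + 2) * (1 - e) := by
        have h1 : (-e)/α ≤ (1-e)/α := by gcongr <;> linarith
        have h2 : (1/α+2)*(1-e) = (1-e)/α + 2*(1-e) := by ring
        rw [hK_eq]; linarith
      have hK2 : K^2 ≤ c2 * (1-e)^2 := by
        rw [hc2_def, ← mul_pow]
        exact pow_le_pow_left₀ hK_pos.le hKle 2
      have he1 : (1:ℝ) ≤ (1-e)^2 := by nlinarith [sq_nonneg e]
      have hεγ : ε ^ (-(γ/α)) ≤ ε ^ (-2:ℝ) := by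
        apply hmono
        have : γ/α ≤ 2 := by rw [div_le_iff₀ hα]; linarith
        linarith
      calc ∑ l ∈ Finset.range (L+1), C l * ((Nl l : ℕ) : ℝ)
          ≤ cc * ε ^ (-2:ℝ) * K^2 + cc * cG * ε ^ (-(γ/α)) := hsum
        _ ≤ cc * ε ^ (-2:ℝ) * (c2 * (1-e)^2) + cc * cG * (ε ^ (-2:ℝ) * (1-e)^2) := by
            apply add_le_add
            · exact mul_le_mul_of_nonneg_left hK2 (mul_pos hcc hεm2).le
            · calc cc * cG * ε ^ (-(γ/α)) ≤ cc * cG * ε ^ (-2:ℝ) :=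
                  mul_le_mul_of_nonneg_left hεγ (mul_pos hcc hcG).le
                _ ≤ cc * cG * (ε ^ (-2:ℝ) * (1-e)^2) := by
                  linarith [mul_le_mul_of_nonneg_left he1
                    (mul_pos (mul_pos hcc hcG) hεm2).le]
        _ ≤ (cc*(c1+c2+c3) + cc*cG) * (ε ^ (-2:ℝ) * (1-e)^2) := by
            have hX : (0:ℝ) < ε ^ (-2:ℝ) * (1-e)^2 :=
              mul_pos hεm2 (pow_pos (by linarith) 2)
            linarith [mul_nonneg (mul_nonneg hcc.le hc1) hX.le,
              mul_nonneg (mul_nonneg hcc.le hc3) hX.le]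
    · rw [if_neg (not_lt.mpr hcs.le), if_neg hcs.ne]
      have hr1 : 1 < r := by
        rw [hr_def, Real.one_lt_rpow_iff_of_pos two_pos]
        exact Or.inl ⟨one_lt_two, by linarith⟩
      have hr1' : (0:ℝ) < r - 1 := by linarith
      have hεX : 0 < ε ^ (-((γ-β)/2/α)) := Real.rpow_pos_of_pos hε _
      have hrL : r ^ L ≤ r * ε ^ (-((γ-β)/2/α)) := by
        have h1 : r ^ L = (2:ℝ) ^ (((γ-β)/2) * (L:ℝ)) := by
          rw [hr_def, ← Real.rpow_natCast ((2:ℝ) ^ ((γ-β)/2)) L, ← Real.rpow_mul two_pos.le]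
        rw [h1, hr_def]
        exact hFactB ((γ-β)/2) (by linarith)
      have hKle : K ≤ (r^2/(r-1)) * ε ^ (-((γ-β)/2/α)) := by
        have hKr : K = ∑ l ∈ Finset.range (L+1), r ^ l :=
          Finset.sum_congr rfl (fun l _ => hP l)
        rw [hKr, geom_sum_eq (ne_of_gt hr1) (L+1)]
        have h3 : r^(L+1) = r * r^L := by rw [pow_succ]; ring
        have h4 : r * r^L ≤ r * (r * ε ^ (-((γ-β)/2/α))) :=
          mul_le_mul_of_nonneg_left hrL hr_pos.le
        have h5 : r * (r * ε ^ (-((γ-β)/2/α))) = r^2 * ε ^ (-((γ-β)/2/α)) := by ring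
        calc (r^(L+1)-1)/(r-1) ≤ (r^2 * ε ^ (-((γ-β)/2/α)))/(r-1) := by
              apply (div_le_div_iff_of_pos_right hr1').mpr; linarith
          _ = (r^2/(r-1)) * ε ^ (-((γ-β)/2/α)) := by ring
      have hK2 : K^2 ≤ c3 * ε ^ (-((γ-β)/α)) := by
        calc K^2 ≤ ((r^2/(r-1)) * ε ^ (-((γ-β)/2/α)))^2 :=
              pow_le_pow_left₀ hK_pos.le hKle 2
          _ = c3 * (ε ^ (-((γ-β)/2/α)) * ε ^ (-((γ-β)/2/α))) := by rw [hc3_def]; ring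
          _ = c3 * ε ^ (-((γ-β)/α)) := by
              rw [← Real.rpow_add hε, show -((γ-β)/2/α) + -((γ-β)/2/α) = -((γ-β)/α) by ring]
      have hcomb : ε ^ (-2:ℝ) * ε ^ (-((γ-β)/α)) = ε ^ ((β-γ)/α - 2) := by
        rw [← Real.rpow_add hε]; congr 1; ring
      have hεY : 0 < ε ^ ((β-γ)/α - 2) := Real.rpow_pos_of_pos hε _
      have hεγ : ε ^ (-(γ/α)) ≤ ε ^ ((β-γ)/α - 2) := by
        apply hmono
        have h1 : β/α ≤ 2 := by rw [div_le_iff₀ hα]; linarith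
        have h2 : (β-γ)/α = β/α - γ/α := by ring
        linarith
      calc ∑ l ∈ Finset.range (L+1), C l * ((Nl l : ℕ) : ℝ)
          ≤ cc * ε ^ (-2:ℝ) * K^2 + cc * cG * ε ^ (-(γ/α)) := hsum
        _ ≤ cc * ε ^ (-2:ℝ) * (c3 * ε ^ (-((γ-β)/α))) + cc * cG * ε ^ ((β-γ)/α - 2) := by
            apply add_le_add
            · exact mul_le_mul_of_nonneg_left hK2 (mul_pos hcc hεm2).le
            · exact mul_le_mul_of_nonneg_left hεγ (mul_pos hcc hcG).le
        _ = cc * c3 * ε ^ ((β-γ)/α - 2) + cc * cG * ε ^ ((β-γ)/α - 2) := by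
            rw [← hcomb]; ring
        _ ≤ (cc*(c1+c2+c3) + cc*cG) * ε ^ ((β-γ)/α - 2) := by
            linarith [mul_nonneg (mul_nonneg hcc.le hc1) hεY.le,
              mul_nonneg (mul_nonneg hcc.le hc2.le) hεY.le]
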